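/- Let d ≥ 2 and G ≤ Aut(T_d) be a strongly fractal group (i.e., G is self-similar and for each i the projection of ψ(St_G(1)) to the i-th coordinate is all of G). Then the set of left Engel elements of G that lie in St_G(1) equals the set of h ∈ St_G(1) all of whose first-level sections are left Engel elements of G. -/

import Mathlib

/-- Vertices of the rooted `d`-adic tree `T_d` are finite words over `Fin d`. -/
abbrev Vertex (d : ℕ) : Type := List (Fin d)

/-- A permutation of the vertices of `T_d` is a tree automorphism iff it (and its
inverse) preserves word length (levels) and the prefix relation (adjacency). -/
def IsTreeAut (d : ℕ) (e : Equiv.Perm (Vertex d)) : Prop :=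
  (∀ l, (e l).length = l.length) ∧ (∀ l, (e.symm l).length = l.length) ∧
    (∀ l₁ l₂ : Vertex d, l₁ <+: l₂ → e l₁ <+: e l₂) ∧
    (∀ l₁ l₂ : Vertex d, l₁ <+: l₂ → e.symm l₁ <+: e.symm l₂)

/-- The group `Aut T_d` of automorphisms of the rooted `d`-adic tree. -/
def treeAutGroup (d : ℕ) : Subgroup (Equiv.Perm (Vertex d)) where
  carrier := {e | IsTreeAut d e}
  one_mem' := ⟨fun _ => rfl, fun _ => rfl, fun _ _ h => h, fun _ _ h => h⟩
  mul_mem' := by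
    rintro a b ⟨ha1, ha2, ha3, ha4⟩ ⟨hb1, hb2, hb3, hb4⟩
    exact ⟨fun l => by simp [Equiv.Perm.mul_def, ha1, hb1],
      fun l => by simp [Equiv.Perm.mul_def, ha2, hb2],
      fun l₁ l₂ h => by simpa [Equiv.Perm.mul_def] using ha3 _ _ (hb3 _ _ h),
      fun l₁ l₂ h => by simpa [Equiv.Perm.mul_def] using hb4 _ _ (ha4 _ _ h)⟩
  inv_mem' := by
    rintro a ⟨ha1, ha2, ha3, ha4⟩
    exact ⟨ha2, fun l => by exact ha1 l,
      ha4, fun l₁ l₂ h => by exact ha3 _ _ h⟩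

/-- The `n`-th level stabilizer `St(n)` in `Aut T_d`: automorphisms fixing every
vertex of the first `n` levels. -/
def levelStab (d n : ℕ) : Subgroup (treeAutGroup d) where
  carrier := {g | ∀ l : Vertex d, l.length ≤ n → g.val l = l}
  one_mem' := fun _ _ => rfl
  mul_mem' := by
    intro a b ha hb l hl
    have : ((a * b : treeAutGroup d) : Equiv.Perm (Vertex d)) l = a.val (b.val l) := rfl
    rw [this, hb l hl, ha l hl]
  inv_mem' := by
    intro a ha l hl
    have h := ha l hl
    have : ((a⁻¹ : treeAutGroup d) : Equiv.Perm (Vertex d)) l = a.val⁻¹ l := rfl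
    rw [this]
    calc a.val⁻¹ l = a.val⁻¹ (a.val l) := by rw [h]
    _ = l := by simp

/-- `t` is the section of `g` at the first-level vertex `i`: for some first-level
vertex `j` (the image of `i` under `g`), `g (i w) = j (t w)` for all words `w`.
This uniquely determines `t`, and corresponds to the `i`-th component of the
canonical isomorphism `ψ : St(1) → (Aut T_d)^d` when `g ∈ St(1)` (where `j = i`). -/
def IsSection {d : ℕ} (g t : treeAutGroup d) (i : Fin d) : Prop :=
  ∃ j : Fin d, ∀ w : Vertex d, g.val (i :: w) = j :: t.val w

/-- Iterated commutator `[x, g, ..., g]` (with `n` copies of `g`), where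
`[x,g] = x⁻¹g⁻¹xg`, `engel x g 0 = x`. -/
def engel {G : Type*} [Group G] (x g : G) : ℕ → G
  | 0 => x
  | n + 1 => (engel x g n)⁻¹ * g⁻¹ * engel x g n * g

/-- `g` is a left Engel element of the subgroup `G`: for every `x ∈ G` some
iterated commutator `[x, g, ..., g]` is trivial. -/
def IsLeftEngelIn {X : Type*} [Group X] (G : Subgroup X) (g : X) : Prop :=
  ∀ x ∈ G, ∃ n, 1 ≤ n ∧ engel x g n = 1

namespace EngelHelper

variable {d : ℕ}

/-- Simplified section predicate (image vertex equals `i`). -/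
def Sec (g t : treeAutGroup d) (i : Fin d) : Prop :=
  ∀ w : Vertex d, g.val (i :: w) = i :: t.val w

lemma val_nil (t : treeAutGroup d) : t.val ([] : Vertex d) = [] :=
  List.length_eq_zero_iff.mp (t.2.1 ([] : Vertex d))

lemma sec_of_isSection {g t : treeAutGroup d} {i : Fin d}
    (hg : g ∈ levelStab d 1) (h : IsSection g t i) : Sec g t i := by
  obtain ⟨j, hj⟩ := h
  have h0 := hj []
  rw [val_nil, hg [i] (by simp)] at h0
  have hij : i = j := by injection h0
  intro w
  rw [hj w, ← hij]

lemma sec_one (i : Fin d) : Sec (1 : treeAutGroup d) 1 i := fun _ => rfl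

lemma sec_mul {a b x y : treeAutGroup d} {i : Fin d}
    (ha : Sec a x i) (hb : Sec b y i) : Sec (a * b) (x * y) i := by
  intro w
  show a.val (b.val (i :: w)) = i :: x.val (y.val w)
  rw [hb, ha]

lemma sec_inv {a x : treeAutGroup d} {i : Fin d} (ha : Sec a x i) :
    Sec a⁻¹ x⁻¹ i := by
  intro w
  have h1 : a.val (i :: (x⁻¹ : treeAutGroup d).val w) = i :: w := by
    rw [ha]
    show i :: x.val (x.val⁻¹ w) = i :: w
    exact congrArg _ (x.val.apply_symm_apply w)
  show a.val⁻¹ (i :: w) = i :: (x⁻¹ : treeAutGroup d).val w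
  rw [← h1]; exact a.val.symm_apply_apply _

lemma sec_engel {a b x y : treeAutGroup d} {i : Fin d}
    (ha : Sec a x i) (hb : Sec b y i) (n : ℕ) :
    Sec (engel a b n) (engel x y n) i := by
  induction n with
  | zero => exact ha
  | succ n ih =>
    exact sec_mul (sec_mul (sec_mul (sec_inv ih) (sec_inv hb)) ih) hb

lemma sec_unique {g t t' : treeAutGroup d} {i : Fin d}
    (h : Sec g t i) (h' : Sec g t' i) : t = t' := by
  apply Subtype.ext
  apply Equiv.ext
  intro l
  have := (h l).symm.trans (h' l)
  injection this

lemma eq_one_of_sec_one {g : treeAutGroup d}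
    (h : ∀ i : Fin d, Sec g 1 i) : g = 1 := by
  apply Subtype.ext
  apply Equiv.ext
  intro l
  cases l with
  | nil => exact val_nil g
  | cons i w => exact h i w

lemma engel_stable {X : Type*} [Group X] {x g : X} {n : ℕ}
    (h : engel x g n = 1) (k : ℕ) : engel x g (n + k) = 1 := by
  induction k with
  | zero => exact h
  | succ k ih =>
    have e : engel x g (n + (k + 1)) =
        (engel x g (n + k))⁻¹ * g⁻¹ * engel x g (n + k) * g := rfl
    rw [e, ih]; simp

lemma engel_shift {X : Type*} [Group X] (x g : X) (n : ℕ) :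
    engel x g (n + 1) = engel (engel x g 1) g n := by
  induction n with
  | zero => rfl
  | succ n ih => show _ * _ * _ * _ = _ * _ * _ * _; rw [ih]

lemma conj_mem_levelStab {x h : treeAutGroup d} (hh : h ∈ levelStab d 1) :
    x⁻¹ * h * x ∈ levelStab d 1 := by
  intro l hl
  show x.val⁻¹ (h.val (x.val l)) = l
  have hlen : (x.val l).length ≤ 1 := by rw [x.2.1 l]; exact hl
  rw [hh _ hlen]; exact x.val.symm_apply_apply l

end EngelHelper

theorem stmt_12 (d : ℕ) (hd : 2 ≤ d) (G : Subgroup (treeAutGroup d))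
    (hself : ∀ g ∈ G, ∀ i : Fin d, ∃ t ∈ G, IsSection g t i)
    (hfrac : ∀ i : Fin d, ∀ x ∈ G, ∃ h, h ∈ G ∧ h ∈ levelStab d 1 ∧ IsSection h x i) :
    ∀ h, h ∈ G → h ∈ levelStab d 1 →
      (IsLeftEngelIn G h ↔
        ∀ i : Fin d, ∃ t, t ∈ G ∧ IsSection h t i ∧ IsLeftEngelIn G t) := by
  intro h hG hSt
  constructor
  · intro hEng i
    obtain ⟨t, htG, htsec⟩ := hself h hG i
    refine ⟨t, htG, htsec, ?_⟩
    intro x hxG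
    obtain ⟨a, haG, haSt, haSec⟩ := hfrac i x hxG
    obtain ⟨n, hn1, hn⟩ := hEng a haG
    refine ⟨n, hn1, ?_⟩
    have hsec := EngelHelper.sec_engel (EngelHelper.sec_of_isSection haSt haSec)
      (EngelHelper.sec_of_isSection hSt htsec) n
    rw [hn] at hsec
    exact EngelHelper.sec_unique hsec (EngelHelper.sec_one i)
  · intro hsecs x hxG
    set y : treeAutGroup d := engel x h 1 with hy
    have hyG : y ∈ G := by
      have : y = x⁻¹ * h⁻¹ * x * h := rfl
      rw [this]
      exact G.mul_mem (G.mul_mem (G.mul_mem (G.inv_mem hxG) (G.inv_mem hG)) hxG) hG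
    have hySt : y ∈ levelStab d 1 := by
      have : y = (x⁻¹ * h⁻¹ * x) * h := rfl
      rw [this]
      exact (levelStab d 1).mul_mem
        (EngelHelper.conj_mem_levelStab ((levelStab d 1).inv_mem hSt)) hSt
    choose t htG htsec htEng using hsecs
    choose yi hyiG hyisec using hself y hyG
    choose n hn1 hn using fun i => htEng i (yi i) (hyiG i)
    set N : ℕ := Finset.univ.sup n with hN
    have hNn : ∀ i, engel (yi i) (t i) N = 1 := by
      intro i
      have hle : n i ≤ N := Finset.le_sup (Finset.mem_univ i)
      obtain ⟨k, hk⟩ := Nat.exists_eq_add_of_le hle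
      rw [hk]
      exact EngelHelper.engel_stable (hn i) k
    have hy1 : engel y h N = 1 := by
      apply EngelHelper.eq_one_of_sec_one
      intro i
      have hsec := EngelHelper.sec_engel
        (EngelHelper.sec_of_isSection hySt (hyisec i))
        (EngelHelper.sec_of_isSection hSt (htsec i)) N
      rw [hNn i] at hsec
      exact hsec
    refine ⟨N + 1, by omega, ?_⟩
    rw [EngelHelper.engel_shift, ← hy, hy1]
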